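/- For every interior initial point x ∈ S² with all coordinates strictly positive and x ≠ c, the orbit of the zero-sum replicator map R_H approaches the boundary of the simplex: ξ(R_H^{(n)}(x)) → 0 as n → ∞, where ξ(x) = x_1 x_2 x_3; equivalently, the omega-limit set ω(x) of the orbit is contained in the boundary ∂S² = {x ∈ S² : x_1 x_2 x_3 = 0}. Moreover ω(x) is an infinite set. -/

import Mathlib

open Filter Topology

/-- The two-dimensional standard simplex `S²` in `ℝ³`. -/
def simplex2 : Set (Fin 3 → ℝ) :=
  {x | (∀ k, 0 ≤ x k) ∧ x 0 + x 1 + x 2 = 1}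

/-- The part `B³_+` of the unit `l_1`-ball lying in the positive orthant of `ℝ³`. -/
def ball3 : Set (Fin 3 → ℝ) :=
  {x | (∀ k, 0 ≤ x k) ∧ x 0 + x 1 + x 2 ≤ 1}

lemma cyc_lemma (A B C a b c : ℝ)
    (hAB : A ≤ B ↔ a ≤ b) (hBA : B ≤ A ↔ b ≤ a)
    (hBC : B ≤ C ↔ b ≤ c) (hCB : C ≤ B ↔ c ≤ b)
    (hAC : A ≤ C ↔ a ≤ c) (hCA : C ≤ A ↔ c ≤ a)
    (hne : ¬(a = b ∧ b = c)) :
    A*(b-a) + B*(c-b) + C*(a-c) < 0 := by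
  have sAB : a < b → A < B := fun h => lt_of_not_ge fun hh => absurd (hBA.1 hh) (not_le.2 h)
  have sBA : b < a → B < A := fun h => lt_of_not_ge fun hh => absurd (hAB.1 hh) (not_le.2 h)
  have sBC : b < c → B < C := fun h => lt_of_not_ge fun hh => absurd (hCB.1 hh) (not_le.2 h)
  have sCB : c < b → C < B := fun h => lt_of_not_ge fun hh => absurd (hBC.1 hh) (not_le.2 h)
  have sAC : a < c → A < C := fun h => lt_of_not_ge fun hh => absurd (hCA.1 hh) (not_le.2 h)
  have sCA : c < a → C < A := fun h => lt_of_not_ge fun hh => absurd (hAC.1 hh) (not_le.2 h)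
  rcases le_total a b with h1 | h1
  · rcases le_total b c with h2 | h2
    · -- case 1 : a ≤ b ≤ c ; S = -(C-A)(b-a) - (C-B)(c-b)
      rcases lt_or_eq_of_le h1 with h1' | h1'
      · nlinarith [mul_pos (sub_pos.2 (lt_of_lt_of_le (sAB h1') (hBC.2 h2))) (sub_pos.2 h1'),
          mul_nonneg (sub_nonneg.2 (hBC.2 h2)) (sub_nonneg.2 h2)]
      · have h2' : b < c := lt_of_le_of_ne h2 (fun hh => hne ⟨h1', hh⟩)
        nlinarith [mul_pos (sub_pos.2 (sBC h2')) (sub_pos.2 h2'),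
          mul_nonneg (sub_nonneg.2 (hAC.2 (h1.trans h2))) (sub_nonneg.2 h1)]
    · rcases le_total a c with h3 | h3
      · -- case 3 : a ≤ c ≤ b ; S = -(A-B)(c-b) - (A-C)(a-c)  [note signs]
        rcases lt_or_eq_of_le h3 with h3' | h3'
        · nlinarith [mul_pos (sub_pos.2 (sAC h3')) (sub_pos.2 h3'),
            mul_nonneg (sub_nonneg.2 (hAB.2 h1)) (sub_nonneg.2 h2)]
        · have h2' : c < b := lt_of_le_of_ne h2 (fun hh => hne ⟨h3'.trans hh, hh.symm⟩)
          nlinarith [mul_pos (sub_pos.2 (sAB (h3' ▸ h2'))) (sub_pos.2 h2'),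
            mul_nonneg (sub_nonneg.2 (hCA.2 (le_of_eq h3'.symm))) (sub_nonneg.2 (le_of_eq h3'.symm))]
      · -- case 6 : c ≤ a ≤ b ; S = -(B-C)(a-c) - (B-A)(b-a)
        rcases lt_or_eq_of_le h1 with h1' | h1'
        · nlinarith [mul_pos (sub_pos.2 (sAB h1')) (sub_pos.2 h1'),
            mul_nonneg (sub_nonneg.2 (hCB.2 (h3.trans h1))) (sub_nonneg.2 h3)]
        · have h3' : c < a := lt_of_le_of_ne h3 (fun hh => hne ⟨h1', by rw [← h1', ← hh]⟩)
          nlinarith [mul_pos (sub_pos.2 (sCB (h3'.trans_le h1))) (sub_pos.2 h3'),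
            mul_nonneg (sub_nonneg.2 (hAB.2 h1)) (sub_nonneg.2 h1)]
  · rcases le_total b c with h2 | h2
    · rcases le_total a c with h3 | h3
      · -- case 2 : b ≤ a ≤ c ; S = -(A-B)(a-b) - (C-B)(c-a)
        rcases lt_or_eq_of_le h1 with h1' | h1'
        · nlinarith [mul_pos (sub_pos.2 (sBA h1')) (sub_pos.2 h1'),
            mul_nonneg (sub_nonneg.2 (hBC.2 h2)) (sub_nonneg.2 h3)]
        · have h3' : a < c := lt_of_le_of_ne h3 (fun hh => hne ⟨h1'.symm, by rw [h1', hh]⟩)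
          nlinarith [mul_pos (sub_pos.2 (sBC (h1'.le.trans_lt h3'))) (sub_pos.2 h3'),
            mul_nonneg (sub_nonneg.2 (hBA.2 h1)) (sub_nonneg.2 h1)]
      · -- case 5 : b ≤ c ≤ a ; S = -(A-B)(c-b) - (A-C)(a-c)
        rcases lt_or_eq_of_le h3 with h3' | h3'
        · nlinarith [mul_pos (sub_pos.2 (sCA h3')) (sub_pos.2 h3'),
            mul_nonneg (sub_nonneg.2 (hBA.2 (h2.trans h3))) (sub_nonneg.2 h2)]
        · have h2' : b < c := lt_of_le_of_ne h2 (fun hh => hne ⟨by rw [hh, h3'], hh⟩)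
          nlinarith [mul_pos (sub_pos.2 (sBA (h2'.trans_le h3))) (sub_pos.2 h2'),
            mul_nonneg (sub_nonneg.2 (hCA.2 h3)) (sub_nonneg.2 h3)]
    · -- case 4 : c ≤ b ≤ a ; S = -(A-C)(a-b) - (B-C)(b-c)
      rcases lt_or_eq_of_le h1 with h1' | h1'
      · nlinarith [mul_pos (sub_pos.2 (lt_of_le_of_lt (hCB.2 h2) (sBA h1'))) (sub_pos.2 h1'),
          mul_nonneg (sub_nonneg.2 (hCB.2 h2)) (sub_nonneg.2 h2)]
      · have h2' : c < b := lt_of_le_of_ne h2 (fun hh => hne ⟨h1'.symm, hh.symm⟩)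
        nlinarith [mul_pos (sub_pos.2 (sCB h2')) (sub_pos.2 h2'),
          mul_nonneg (sub_nonneg.2 (hCA.2 (h2.trans h1))) (sub_nonneg.2 h1)]



lemma amgm27 (u v w : ℝ) (hu : 0 ≤ u) (hv : 0 ≤ v) (hw : 0 ≤ w) :
    27*(u*v*w) ≤ (u+v+w)^3 := by
  nlinarith [mul_nonneg hu (sq_nonneg (v-w)), mul_nonneg hv (sq_nonneg (u-w)),
    mul_nonneg hw (sq_nonneg (u-v)),
    mul_nonneg (add_nonneg (add_nonneg hu hv) hw)
      (add_nonneg (add_nonneg (sq_nonneg (u-v)) (sq_nonneg (v-w))) (sq_nonneg (u-w)))]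

lemma amgm3' (u v w : ℝ) (hu : 0 ≤ u) (hv : 0 ≤ v) (hw : 0 ≤ w)
    (h : u + v + w ≤ 3) : u*v*w ≤ 1 := by
  have h27 := amgm27 u v w hu hv hw
  have hs : 0 ≤ u + v + w := by linarith
  nlinarith [mul_nonneg (sub_nonneg.2 h) (by nlinarith [sq_nonneg (u+v+w)] : 0 ≤ (u+v+w)^2 + 3*(u+v+w) + 9)]

lemma amgm3 (u v w : ℝ) (hu : 0 ≤ u) (hv : 0 ≤ v) (hw : 0 ≤ w)
    (h : u + v + w < 3) : u*v*w < 1 := by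
  have h27 := amgm27 u v w hu hv hw
  have hs : 0 ≤ u + v + w := by linarith
  nlinarith [mul_pos (sub_pos.2 h) (by nlinarith [sq_nonneg (u+v+w)] : (0:ℝ) < (u+v+w)^2 + 3*(u+v+w) + 9)]

lemma growth_lemma (u : ℕ → ℝ) (r : ℝ) (hr : 1 < r) (h0 : 0 < u 0)
    (hle : ∀ n, u n ≤ 1) (hstep : ∀ n, u n * r ≤ u (n+1)) : False := by
  have hpos : ∀ n, 0 < u n := by
    intro n; induction n with
    | zero => exact h0
    | succ n ih => exact lt_of_lt_of_le (by positivity) (hstep n)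
  have key : ∀ n, u 0 * r ^ n ≤ u n := by
    intro n; induction n with
    | zero => simp
    | succ n ih =>
      calc u 0 * r ^ (n+1) = (u 0 * r ^ n) * r := by ring
      _ ≤ u n * r := by nlinarith
      _ ≤ u (n+1) := hstep n
  obtain ⟨n, hn⟩ := pow_unbounded_of_one_lt (1 / u 0) hr
  have := key n
  have h2 : (1:ℝ) < u 0 * r ^ n := by
    rw [div_lt_iff₀ h0] at hn; nlinarith
  linarith [hle n]

lemma simplex2_isClosed : IsClosed simplex2 := by
  have : simplex2 = (⋂ k, {y : Fin 3 → ℝ | 0 ≤ y k}) ∩ {y | y 0 + y 1 + y 2 = 1} := by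
    ext y; simp only [simplex2, Set.mem_setOf_eq, Set.mem_inter_iff, Set.mem_iInter]
  rw [this]
  exact ((isClosed_iInter fun k => isClosed_le continuous_const (continuous_apply k)).inter
    (isClosed_eq (by continuity) continuous_const))

lemma simplex2_isCompact : IsCompact simplex2 := by
  refine IsCompact.of_isClosed_subset (isCompact_Icc
    (a := fun _ : Fin 3 => (0:ℝ)) (b := fun _ => 1)) simplex2_isClosed ?_
  rintro y ⟨h0, hs⟩
  constructor
  · intro k; exact h0 k
  · intro k; fin_cases k <;> simp <;> nlinarith [h0 0, h0 1, h0 2]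


lemma coord_le_one {y : Fin 3 → ℝ} (hy : y ∈ simplex2) : ∀ k, y k ≤ 1 := by
  obtain ⟨h0, hs⟩ := hy
  intro k; fin_cases k <;> simp <;> nlinarith [h0 0, h0 1, h0 2]

lemma sball : simplex2 ⊆ ball3 := fun _ hy => ⟨hy.1, le_of_eq hy.2⟩

lemma xile (y : Fin 3 → ℝ) (hy : y ∈ simplex2) : y 0 * y 1 * y 2 ≤ 1/27 := by
  obtain ⟨h0, hs⟩ := hy
  have := amgm3' (3 * y 0) (3 * y 1) (3 * y 2) (by linarith [h0 0]) (by linarith [h0 1])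
    (by linarith [h0 2]) (by linarith)
  nlinarith [this]

lemma center_xi : (![1/3,1/3,1/3] : Fin 3 → ℝ) 0 * (![1/3,1/3,1/3] : Fin 3 → ℝ) 1
    * (![1/3,1/3,1/3] : Fin 3 → ℝ) 2 = 1/27 := by
  norm_num [Matrix.cons_val_zero, Matrix.cons_val_one, Matrix.head_cons, Matrix.cons_val_two, Matrix.tail_cons]

lemma eq_center {y : Fin 3 → ℝ} (hy : y ∈ simplex2) (e1 : y 0 = y 1) (e2 : y 1 = y 2) :
    y = ![1/3,1/3,1/3] := by
  obtain ⟨h0, hs⟩ := hy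
  funext k
  fin_cases k <;>
    [show y 0 = ![1/3,1/3,1/3] 0; show y 1 = ![1/3,1/3,1/3] 1; show y 2 = ![1/3,1/3,1/3] 2] <;>
    norm_num [Matrix.cons_val_zero, Matrix.cons_val_one, Matrix.head_cons, Matrix.cons_val_two, Matrix.tail_cons] <;> linarith

set_option linter.unusedSectionVars false

section Main
variable (F R : (Fin 3 → ℝ) → (Fin 3 → ℝ))
    (hFsop : ∀ x ∈ ball3, ∀ i j, F x j ≤ F x i ↔ x j ≤ x i)
    (hFpos : ∀ x ∈ ball3, ∀ k, 0 < F x k ∧ F x k ≤ 1)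
    (hR0 : ∀ x, R x 0 = x 0 * (1 + x 1 * F x 0 - x 2 * F x 2))
    (hR1 : ∀ x, R x 1 = x 1 * (1 + x 2 * F x 1 - x 0 * F x 0))
    (hR2 : ∀ x, R x 2 = x 2 * (1 + x 0 * F x 2 - x 1 * F x 1))

include hFpos hR0 hR1 hR2
lemma Rmem : ∀ y ∈ simplex2, R y ∈ simplex2 := by
  intro y hy
  have hF := hFpos y (sball hy)
  obtain ⟨h0, hs⟩ := hy
  have hl : ∀ k, y k ≤ 1 := coord_le_one ⟨h0, hs⟩
  constructor
  · intro k; fin_cases k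
    · show (0:ℝ) ≤ R y 0
      rw [hR0]
      nlinarith [mul_nonneg (h0 1) (hF 0).1.le, mul_le_of_le_one_right (h0 2) (hF 2).2,
        h0 0, h0 1, h0 2]
    · show (0:ℝ) ≤ R y 1
      rw [hR1]
      nlinarith [mul_nonneg (h0 2) (hF 1).1.le, mul_le_of_le_one_right (h0 0) (hF 0).2,
        h0 0, h0 1, h0 2]
    · show (0:ℝ) ≤ R y 2
      rw [hR2]
      nlinarith [mul_nonneg (h0 0) (hF 2).1.le, mul_le_of_le_one_right (h0 1) (hF 1).2,
        h0 0, h0 1, h0 2]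
  · rw [hR0, hR1, hR2]; linear_combination hs

lemma Rpos : ∀ y ∈ simplex2, (∀ k, 0 < y k) → ∀ k, 0 < R y k := by
  intro y hy hp
  have hF := hFpos y (sball hy)
  obtain ⟨h0, hs⟩ := hy
  intro k; fin_cases k
  · show (0:ℝ) < R y 0
    rw [hR0]
    nlinarith [mul_nonneg (h0 1) (hF 0).1.le, mul_le_of_le_one_right (h0 2) (hF 2).2,
      hp 0, hp 1, hp 2]
  · show (0:ℝ) < R y 1
    rw [hR1]
    nlinarith [mul_nonneg (h0 2) (hF 1).1.le, mul_le_of_le_one_right (h0 0) (hF 0).2,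
      hp 0, hp 1, hp 2]
  · show (0:ℝ) < R y 2
    rw [hR2]
    nlinarith [mul_nonneg (h0 0) (hF 2).1.le, mul_le_of_le_one_right (h0 1) (hF 1).2,
      hp 0, hp 1, hp 2]

include hFsop in
lemma Rdec : ∀ y ∈ simplex2, (∀ k, 0 < y k) → ¬(y 0 = y 1 ∧ y 1 = y 2) →
    R y 0 * R y 1 * R y 2 < y 0 * y 1 * y 2 := by
  intro y hy hp hne
  have hF := hFpos y (sball hy)
  have hsop := hFsop y (sball hy)
  obtain ⟨h0, hs⟩ := hy
  have hkey : F y 0 * (y 1 - y 0) + F y 1 * (y 2 - y 1) + F y 2 * (y 0 - y 2) < 0 :=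
    cyc_lemma (F y 0) (F y 1) (F y 2) (y 0) (y 1) (y 2)
      (hsop 1 0) (hsop 0 1) (hsop 2 1) (hsop 1 2) (hsop 2 0) (hsop 0 2) hne
  have hfa : 0 < 1 + (y 1 * F y 0 - y 2 * F y 2) := by
    nlinarith [mul_nonneg (h0 1) (hF 0).1.le, mul_le_of_le_one_right (h0 2) (hF 2).2,
      hp 0, hp 1]
  have hfb : 0 < 1 + (y 2 * F y 1 - y 0 * F y 0) := by
    nlinarith [mul_nonneg (h0 2) (hF 1).1.le, mul_le_of_le_one_right (h0 0) (hF 0).2,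
      hp 1, hp 2]
  have hfc : 0 < 1 + (y 0 * F y 2 - y 1 * F y 1) := by
    nlinarith [mul_nonneg (h0 0) (hF 2).1.le, mul_le_of_le_one_right (h0 1) (hF 1).2,
      hp 2, hp 0]
  have hsum : (1 + (y 1 * F y 0 - y 2 * F y 2)) + (1 + (y 2 * F y 1 - y 0 * F y 0))
      + (1 + (y 0 * F y 2 - y 1 * F y 1)) < 3 := by nlinarith [hkey]
  have hprod := amgm3 _ _ _ hfa.le hfb.le hfc.le hsum
  have heq : R y 0 * R y 1 * R y 2 = (y 0 * y 1 * y 2) *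
      ((1 + (y 1 * F y 0 - y 2 * F y 2)) * (1 + (y 2 * F y 1 - y 0 * F y 0))
        * (1 + (y 0 * F y 2 - y 1 * F y 1))) := by
    rw [hR0, hR1, hR2]; ring
  rw [heq]
  nlinarith [mul_pos (mul_pos (hp 0) (hp 1)) (hp 2), hprod]

lemma Rcont (hFdiff : ContDiffOn ℝ 1 F ball3) : ContinuousOn R simplex2 := by
  have hFk : ∀ k, ContinuousOn (fun y => F y k) simplex2 := fun k =>
    (continuous_apply k).comp_continuousOn (hFdiff.continuousOn.mono sball)
  have hyk : ∀ k : Fin 3, ContinuousOn (fun y : Fin 3 → ℝ => y k) simplex2 :=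
    fun k => (continuous_apply k).continuousOn
  rw [continuousOn_pi]
  intro k; fin_cases k
  · show ContinuousOn (fun y => R y 0) simplex2
    simp only [hR0]
    exact (hyk 0).mul ((continuousOn_const.add ((hyk 1).mul (hFk 0))).sub ((hyk 2).mul (hFk 2)))
  · show ContinuousOn (fun y => R y 1) simplex2
    simp only [hR1]
    exact (hyk 1).mul ((continuousOn_const.add ((hyk 2).mul (hFk 1))).sub ((hyk 0).mul (hFk 0)))
  · show ContinuousOn (fun y => R y 2) simplex2
    simp only [hR2]
    exact (hyk 2).mul ((continuousOn_const.add ((hyk 0).mul (hFk 2))).sub ((hyk 1).mul (hFk 1)))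

lemma two_coord {y : Fin 3 → ℝ} (hy : y ∈ simplex2) (i j : Fin 3) (hij : i ≠ j) :
    y i + y j ≤ 1 := by
  obtain ⟨h0, hs⟩ := hy
  fin_cases i <;> fin_cases j <;> simp_all <;> linarith [h0 0, h0 1, h0 2]

lemma near_step : ∀ y ∈ simplex2, ∀ j : Fin 3, 1 - R y j ≤ 2 * (1 - y j) := by
  intro y hy j
  have hRy := Rmem F R hFpos hR0 hR1 hR2 y hy
  have hF := hFpos y (sball hy)
  have hl : ∀ k, y k ≤ 1 := coord_le_one hy
  obtain ⟨h0, hs⟩ := hy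
  have hsum : R y 0 + R y 1 + R y 2 = 1 := hRy.2
  fin_cases j
  · show 1 - R y 0 ≤ 2 * (1 - y 0)
    have e : 1 - R y 0 = R y 1 + R y 2 := by linarith
    rw [e, hR1, hR2]
    nlinarith [mul_le_mul_of_nonneg_left (mul_le_one₀ (hl 2) (hF 1).1.le (hF 1).2) (h0 1),
      mul_le_mul_of_nonneg_left (mul_le_one₀ (hl 0) (hF 2).1.le (hF 2).2) (h0 2),
      mul_nonneg (mul_nonneg (h0 1) (h0 0)) (hF 0).1.le,
      mul_nonneg (mul_nonneg (h0 2) (h0 1)) (hF 1).1.le]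
  · show 1 - R y 1 ≤ 2 * (1 - y 1)
    have e : 1 - R y 1 = R y 0 + R y 2 := by linarith
    rw [e, hR0, hR2]
    nlinarith [mul_le_mul_of_nonneg_left (mul_le_one₀ (hl 1) (hF 0).1.le (hF 0).2) (h0 0),
      mul_le_mul_of_nonneg_left (mul_le_one₀ (hl 0) (hF 2).1.le (hF 2).2) (h0 2),
      mul_nonneg (mul_nonneg (h0 0) (h0 2)) (hF 2).1.le,
      mul_nonneg (mul_nonneg (h0 2) (h0 1)) (hF 1).1.le]
  · show 1 - R y 2 ≤ 2 * (1 - y 2)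
    have e : 1 - R y 2 = R y 0 + R y 1 := by linarith
    rw [e, hR0, hR1]
    nlinarith [mul_le_mul_of_nonneg_left (mul_le_one₀ (hl 1) (hF 0).1.le (hF 0).2) (h0 0),
      mul_le_mul_of_nonneg_left (mul_le_one₀ (hl 2) (hF 1).1.le (hF 1).2) (h0 1),
      mul_nonneg (mul_nonneg (h0 0) (h0 2)) (hF 2).1.le,
      mul_nonneg (mul_nonneg (h0 1) (h0 0)) (hF 0).1.le]

lemma grow_step (δ : ℝ) (hδpos : 0 < δ) (hδ1 : δ ≤ 1) :
    ∀ y ∈ simplex2, (∀ k, δ ≤ F y k) → ∀ j : Fin 3, 1 - y j ≤ δ/6 →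
      y (![2, 0, 1] j) * (1 + δ/2) ≤ R y (![2, 0, 1] j) := by
  intro y hy hδF j hnear
  have hF := hFpos y (sball hy)
  have hl : ∀ k, y k ≤ 1 := coord_le_one hy
  obtain ⟨h0, hs⟩ := hy
  fin_cases j
  · show y 2 * (1 + δ/2) ≤ R y 2
    have hy0 : 1 - δ/6 ≤ y 0 := by
      have : 1 - y 0 ≤ δ/6 := hnear
      linarith
    have hy1 : y 1 ≤ δ/6 := by linarith [h0 2, hy0, hs]
    have t1 : (1 - δ/6) * δ ≤ y 0 * F y 2 :=
      mul_le_mul hy0 (hδF 2) hδpos.le (h0 0)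
    have t2 : y 1 * F y 1 ≤ δ/6 * 1 :=
      mul_le_mul hy1 (hF 1).2 (hF 1).1.le (by linarith)
    have hfac : 1 + δ/2 ≤ 1 + y 0 * F y 2 - y 1 * F y 1 := by nlinarith [sq_nonneg δ]
    rw [hR2]
    exact mul_le_mul_of_nonneg_left hfac (h0 2)
  · show y 0 * (1 + δ/2) ≤ R y 0
    have hy1 : 1 - δ/6 ≤ y 1 := by
      have : 1 - y 1 ≤ δ/6 := hnear
      linarith
    have hy2 : y 2 ≤ δ/6 := by linarith [h0 0, hy1, hs]
    have t1 : (1 - δ/6) * δ ≤ y 1 * F y 0 :=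
      mul_le_mul hy1 (hδF 0) hδpos.le (h0 1)
    have t2 : y 2 * F y 2 ≤ δ/6 * 1 :=
      mul_le_mul hy2 (hF 2).2 (hF 2).1.le (by linarith)
    have hfac : 1 + δ/2 ≤ 1 + y 1 * F y 0 - y 2 * F y 2 := by nlinarith [sq_nonneg δ]
    rw [hR0]
    exact mul_le_mul_of_nonneg_left hfac (h0 0)
  · show y 1 * (1 + δ/2) ≤ R y 1
    have hy2 : 1 - δ/6 ≤ y 2 := by
      have : 1 - y 2 ≤ δ/6 := hnear
      linarith
    have hy0 : y 0 ≤ δ/6 := by linarith [h0 1, hy2, hs]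
    have t1 : (1 - δ/6) * δ ≤ y 2 * F y 1 :=
      mul_le_mul hy2 (hδF 1) hδpos.le (h0 2)
    have t2 : y 0 * F y 0 ≤ δ/6 * 1 :=
      mul_le_mul hy0 (hF 0).2 (hF 0).1.le (by linarith)
    have hfac : 1 + δ/2 ≤ 1 + y 2 * F y 1 - y 0 * F y 0 := by nlinarith [sq_nonneg δ]
    rw [hR1]
    exact mul_le_mul_of_nonneg_left hfac (h0 1)

lemma face_step : ∀ j : Fin 3, ∀ y ∈ simplex2, y j = 0 → (∀ k, k ≠ j → 0 < y k) →
    (R y j = 0 ∧ (∀ k, k ≠ j → 0 < R y k) ∧ y (![1, 2, 0] j) < R y (![1, 2, 0] j)) := by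
  intro j y hy hyj hyk
  have hF := hFpos y (sball hy)
  have hl : ∀ k, y k ≤ 1 := coord_le_one hy
  obtain ⟨h0, hs⟩ := hy
  fin_cases j
  · have hz : y 0 = 0 := hyj
    have hp1 : 0 < y 1 := hyk 1 (by decide)
    have hp2 : 0 < y 2 := hyk 2 (by decide)
    refine ⟨by show R y 0 = 0; rw [hR0, hz]; ring, ?_, ?_⟩
    · intro k hk
      fin_cases k
      · exact absurd rfl hk
      · show 0 < R y 1
        rw [hR1, hz]
        nlinarith [mul_nonneg (h0 2) (hF 1).1.le]
      · show 0 < R y 2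
        rw [hR2, hz]
        have : y 1 * F y 1 < 1 := by
          nlinarith [mul_le_mul_of_nonneg_left (hF 1).2 (h0 1)]
        nlinarith
    · show y 1 < R y 1
      rw [hR1, hz]
      nlinarith [mul_pos (mul_pos hp1 hp2) (hF 1).1]
  · have hz : y 1 = 0 := hyj
    have hp0 : 0 < y 0 := hyk 0 (by decide)
    have hp2 : 0 < y 2 := hyk 2 (by decide)
    refine ⟨by show R y 1 = 0; rw [hR1, hz]; ring, ?_, ?_⟩
    · intro k hk
      fin_cases k
      · show 0 < R y 0
        rw [hR0, hz]
        have : y 2 * F y 2 < 1 := by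
          nlinarith [mul_le_mul_of_nonneg_left (hF 2).2 (h0 2)]
        nlinarith
      · exact absurd rfl hk
      · show 0 < R y 2
        rw [hR2, hz]
        nlinarith [mul_nonneg (h0 0) (hF 2).1.le]
    · show y 2 < R y 2
      rw [hR2, hz]
      nlinarith [mul_pos (mul_pos hp2 hp0) (hF 2).1]
  · have hz : y 2 = 0 := hyj
    have hp0 : 0 < y 0 := hyk 0 (by decide)
    have hp1 : 0 < y 1 := hyk 1 (by decide)
    refine ⟨by show R y 2 = 0; rw [hR2, hz]; ring, ?_, ?_⟩
    · intro k hk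
      fin_cases k
      · show 0 < R y 0
        rw [hR0, hz]
        nlinarith [mul_nonneg (h0 1) (hF 0).1.le]
      · show 0 < R y 1
        rw [hR1, hz]
        have : y 0 * F y 0 < 1 := by
          nlinarith [mul_le_mul_of_nonneg_left (hF 0).2 (h0 0)]
        nlinarith
      · exact absurd rfl hk
    · show y 0 < R y 0
      rw [hR0, hz]
      nlinarith [mul_pos (mul_pos hp0 hp1) (hF 0).1]

end Main

/-- every interior orbit of `R_H` other than the center approaches the
boundary of `S²`: `ξ(R_H^{(n)}(x)) → 0`, the omega-limit set is contained in the
boundary `{x ∈ S² : x₁x₂x₃ = 0}`, and the omega-limit set is infinite. -/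
theorem stmt_16
    (F R : (Fin 3 → ℝ) → (Fin 3 → ℝ))
    (hFdiff : ContDiffOn ℝ 1 F ball3)
    (hFsop : ∀ x ∈ ball3, ∀ i j, F x j ≤ F x i ↔ x j ≤ x i)
    (hFpos : ∀ x ∈ ball3, ∀ k, 0 < F x k ∧ F x k ≤ 1)
    (hR0 : ∀ x, R x 0 = x 0 * (1 + x 1 * F x 0 - x 2 * F x 2))
    (hR1 : ∀ x, R x 1 = x 1 * (1 + x 2 * F x 1 - x 0 * F x 0))
    (hR2 : ∀ x, R x 2 = x 2 * (1 + x 0 * F x 2 - x 1 * F x 1)) :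
    ∀ x ∈ simplex2, (∀ k, 0 < x k) → x ≠ ![1/3, 1/3, 1/3] →
      Tendsto (fun n => (R^[n] x) 0 * (R^[n] x) 1 * (R^[n] x) 2) atTop (𝓝 0) ∧
      {p | ∃ φ : ℕ → ℕ, StrictMono φ ∧ Tendsto (fun n => R^[φ n] x) atTop (𝓝 p)} ⊆
        {y ∈ simplex2 | y 0 * y 1 * y 2 = 0} ∧
      {p | ∃ φ : ℕ → ℕ, StrictMono φ ∧
        Tendsto (fun n => R^[φ n] x) atTop (𝓝 p)}.Infinite := by
  intro x hx hxpos hxc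
  have hRmem := Rmem F R hFpos hR0 hR1 hR2
  have hRpos := Rpos F R hFpos hR0 hR1 hR2
  have hRdec := Rdec F R hFsop hFpos hR0 hR1 hR2
  have hRcont := Rcont F R hFpos hR0 hR1 hR2 hFdiff
  -- orbit invariants
  have horb : ∀ n, R^[n+1] x = R (R^[n] x) := fun n => Function.iterate_succ_apply' R n x
  have hnec : ∀ y : Fin 3 → ℝ, y ∈ simplex2 → (y 0 = y 1 ∧ y 1 = y 2) → y = ![1/3,1/3,1/3] :=
    fun y hy he => eq_center hy he.1 he.2
  have hInv : ∀ n, R^[n] x ∈ simplex2 ∧ (∀ k, 0 < R^[n] x k) ∧ R^[n] x ≠ ![1/3,1/3,1/3] := by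
    intro n; induction n with
    | zero => exact ⟨hx, hxpos, hxc⟩
    | succ n ih =>
      obtain ⟨hm, hp, hc⟩ := ih
      have hm' : R^[n+1] x ∈ simplex2 := by rw [horb]; exact hRmem _ hm
      have hp' : ∀ k, 0 < R^[n+1] x k := by rw [horb]; exact hRpos _ hm hp
      refine ⟨hm', hp', ?_⟩
      have hlt : R^[n+1] x 0 * R^[n+1] x 1 * R^[n+1] x 2 < R^[n] x 0 * R^[n] x 1 * R^[n] x 2 := by
        rw [horb]; exact hRdec _ hm hp (fun hh => hc (hnec _ hm hh))
      intro hh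
      rw [hh, center_xi] at hlt
      have h27 := xile (R^[n] x) hm
      linarith
  have hdecn : ∀ n, R^[n+1] x 0 * R^[n+1] x 1 * R^[n+1] x 2
      < R^[n] x 0 * R^[n] x 1 * R^[n] x 2 := by
    intro n
    obtain ⟨hm, hp, hc⟩ := hInv n
    rw [horb]; exact hRdec _ hm hp (fun hh => hc (hnec _ hm hh))
  set ξ : ℕ → ℝ := fun n => R^[n] x 0 * R^[n] x 1 * R^[n] x 2 with hξ
  have hanti : Antitone ξ := antitone_nat_of_succ_le (fun n => (hdecn n).le)
  have hbdd : BddBelow (Set.range ξ) := by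
    refine ⟨0, ?_⟩; rintro v ⟨n, rfl⟩
    obtain ⟨-, hp, -⟩ := hInv n
    exact le_of_lt (mul_pos (mul_pos (hp 0) (hp 1)) (hp 2))
  have hLtend : Tendsto ξ atTop (𝓝 (⨅ n, ξ n)) := tendsto_atTop_ciInf hanti hbdd
  set L : ℝ := ⨅ n, ξ n with hL
  have hL0 : 0 ≤ L := le_ciInf (fun n => by
    obtain ⟨-, hp, -⟩ := hInv n
    exact le_of_lt (mul_pos (mul_pos (hp 0) (hp 1)) (hp 2)))
  have hcontmul : Continuous (fun y : Fin 3 → ℝ => y 0 * y 1 * y 2) := by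
    exact ((continuous_apply 0).mul (continuous_apply 1)).mul (continuous_apply 2)
  have hLlt : L < 1/27 := by
    have h1 := ciInf_le hbdd 1
    have h2 := hdecn 0
    have h3 := xile x hx
    simp only [Function.iterate_zero, id] at h2
    calc L ≤ ξ 1 := h1
    _ < ξ 0 := hdecn 0
    _ ≤ 1/27 := by simpa [hξ] using xile x hx
  have hLzero : L = 0 := by
    rcases eq_or_lt_of_le hL0 with h | h
    · exact h.symm
    exfalso
    obtain ⟨p, hpmem, φ, hφ, hφt⟩ :=
      simplex2_isCompact.tendsto_subseq (fun n => (hInv n).1)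
    have hξp : p 0 * p 1 * p 2 = L := by
      have t1 : Tendsto (fun n => ξ (φ n)) atTop (𝓝 (p 0 * p 1 * p 2)) :=
        (hcontmul.tendsto p).comp hφt
      have t2 : Tendsto (fun n => ξ (φ n)) atTop (𝓝 L) := hLtend.comp hφ.tendsto_atTop
      exact tendsto_nhds_unique t1 t2
    have hφtW : Tendsto (fun n => R^[φ n] x) atTop (𝓝[simplex2] p) := by
      rw [tendsto_nhdsWithin_iff]
      exact ⟨hφt, Eventually.of_forall (fun n => (hInv (φ n)).1)⟩
    have hRt : Tendsto (fun n => R (R^[φ n] x)) atTop (𝓝 (R p)) :=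
      (hRcont p hpmem).tendsto.comp hφtW
    have hξRp : R p 0 * R p 1 * R p 2 = L := by
      have t1 : Tendsto (fun n => ξ (φ n + 1)) atTop (𝓝 (R p 0 * R p 1 * R p 2)) := by
        have := (hcontmul.tendsto (R p)).comp hRt
        simpa only [Function.comp_def, ← horb] using this
      have t2 : Tendsto (fun n => ξ (φ n + 1)) atTop (𝓝 L) :=
        hLtend.comp ((tendsto_add_atTop_nat 1).comp hφ.tendsto_atTop)
      exact tendsto_nhds_unique t1 t2
    have hppos : ∀ k, 0 < p k := by
      intro k
      rcases lt_or_eq_of_le (hpmem.1 k) with hk | hk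
      · exact hk
      · exfalso
        have hzero : p 0 = 0 ∨ p 1 = 0 ∨ p 2 = 0 := by
          fin_cases k
          · exact Or.inl hk.symm
          · exact Or.inr (Or.inl hk.symm)
          · exact Or.inr (Or.inr hk.symm)
        have hz : p 0 * p 1 * p 2 = 0 := by rcases hzero with hz|hz|hz <;> rw [hz] <;> ring
        rw [hz] at hξp; exact absurd hξp.symm (ne_of_gt h)
    have hpc : p ≠ ![1/3,1/3,1/3] := by
      intro hh; rw [hh, center_xi] at hξp
      rw [← hξp] at hLlt; norm_num at hLlt
    have := hRdec p hpmem hppos (fun hh => hpc (hnec _ hpmem hh))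
    rw [hξp, hξRp] at this
    exact lt_irrefl L this
  have part1 : Tendsto ξ atTop (𝓝 0) := hLzero ▸ hLtend
  have part2 : {p | ∃ φ : ℕ → ℕ, StrictMono φ ∧ Tendsto (fun n => R^[φ n] x) atTop (𝓝 p)} ⊆
      {y ∈ simplex2 | y 0 * y 1 * y 2 = 0} := by
    rintro p ⟨φ, hφ, hφt⟩
    have hpmem : p ∈ simplex2 :=
      simplex2_isClosed.mem_of_tendsto hφt (Eventually.of_forall (fun n => (hInv (φ n)).1))
    refine ⟨hpmem, ?_⟩
    have t1 : Tendsto (fun n => ξ (φ n)) atTop (𝓝 (p 0 * p 1 * p 2)) :=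
      (hcontmul.tendsto p).comp hφt
    have t2 : Tendsto (fun n => ξ (φ n)) atTop (𝓝 0) := part1.comp hφ.tendsto_atTop
    exact tendsto_nhds_unique t1 t2
  refine ⟨part1, part2, ?_⟩
  obtain ⟨δ, hδpos, hδ1, hδF⟩ : ∃ δ : ℝ, 0 < δ ∧ δ ≤ 1 ∧ ∀ y ∈ simplex2, ∀ k, δ ≤ F y k := by
    have hFk : ∀ k : Fin 3, ContinuousOn (fun y => F y k) simplex2 := fun k =>
      (continuous_apply k).comp_continuousOn (hFdiff.continuousOn.mono sball)
    obtain ⟨z0, hz0, hmin0⟩ := simplex2_isCompact.exists_isMinOn ⟨x, hx⟩ (hFk 0)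
    obtain ⟨z1, hz1, hmin1⟩ := simplex2_isCompact.exists_isMinOn ⟨x, hx⟩ (hFk 1)
    obtain ⟨z2, hz2, hmin2⟩ := simplex2_isCompact.exists_isMinOn ⟨x, hx⟩ (hFk 2)
    refine ⟨min (min (F z0 0) (F z1 1)) (min (F z2 2) 1), ?_, ?_, ?_⟩
    · exact lt_min (lt_min (hFpos z0 (sball hz0) 0).1 (hFpos z1 (sball hz1) 1).1)
        (lt_min (hFpos z2 (sball hz2) 2).1 one_pos)
    · exact le_trans (min_le_right _ _) (min_le_right _ _)
    · intro y hy k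
      fin_cases k
      · exact le_trans (le_trans (min_le_left _ _) (min_le_left _ _)) (isMinOn_iff.1 hmin0 y hy)
      · exact le_trans (le_trans (min_le_left _ _) (min_le_right _ _)) (isMinOn_iff.1 hmin1 y hy)
      · exact le_trans (le_trans (min_le_right _ _) (min_le_left _ _)) (isMinOn_iff.1 hmin2 y hy)
  set Ω : Set (Fin 3 → ℝ) :=
    {p | ∃ φ : ℕ → ℕ, StrictMono φ ∧ Tendsto (fun n => R^[φ n] x) atTop (𝓝 p)} with hΩdef
  have hΩinv : ∀ p ∈ Ω, p ∈ simplex2 → R p ∈ Ω := by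
    rintro p ⟨φ, hφ, hφt⟩ hp
    refine ⟨fun n => φ n + 1, hφ.add_const 1, ?_⟩
    have hφtW : Tendsto (fun n => R^[φ n] x) atTop (𝓝[simplex2] p) :=
      tendsto_nhdsWithin_iff.2 ⟨hφt, Eventually.of_forall fun n => (hInv (φ n)).1⟩
    have h := (hRcont p hp).tendsto.comp hφtW
    have he : (fun n => R^[φ n + 1] x) = fun n => R (R^[φ n] x) := by
      funext n; exact horb (φ n)
    rw [he]; exact h
  have hΩs : ∀ p ∈ Ω, p ∈ simplex2 := fun p hp => (part2 hp).1
  have hexist : ∃ p ∈ Ω, ∃ j : Fin 3, p j = 0 ∧ ∀ k, k ≠ j → 0 < p k := by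
    by_contra hno
    push_neg at hno
    have hvert : ∀ q ∈ Ω, ∃ m : Fin 3, q m = 1 := by
      intro q hq
      obtain ⟨hqmem, hqprod⟩ := part2 hq
      have hzero : q 0 = 0 ∨ q 1 = 0 ∨ q 2 = 0 := by
        rcases mul_eq_zero.1 hqprod with h | h
        · rcases mul_eq_zero.1 h with h | h
          · exact Or.inl h
          · exact Or.inr (Or.inl h)
        · exact Or.inr (Or.inr h)
      obtain ⟨h0, hs⟩ := hqmem
      rcases hzero with h | h | h
      · obtain ⟨k, hk, hk0⟩ := hno q hq 0 h
        have hkz : q k = 0 := le_antisymm hk0 (h0 k)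
        fin_cases k
        · exact absurd rfl hk
        · refine ⟨2, ?_⟩
          have e1 : q 1 = 0 := hkz
          linarith
        · refine ⟨1, ?_⟩
          have e1 : q 2 = 0 := hkz
          linarith
      · obtain ⟨k, hk, hk0⟩ := hno q hq 1 h
        have hkz : q k = 0 := le_antisymm hk0 (h0 k)
        fin_cases k
        · refine ⟨2, ?_⟩
          have e1 : q 0 = 0 := hkz
          linarith
        · exact absurd rfl hk
        · refine ⟨0, ?_⟩
          have e1 : q 2 = 0 := hkz
          linarith
      · obtain ⟨k, hk, hk0⟩ := hno q hq 2 h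
        have hkz : q k = 0 := le_antisymm hk0 (h0 k)
        fin_cases k
        · refine ⟨1, ?_⟩
          have e1 : q 0 = 0 := hkz
          linarith
        · refine ⟨0, ?_⟩
          have e1 : q 1 = 0 := hkz
          linarith
        · exact absurd rfl hk
    set ε : ℝ := δ/6 with hε
    have hεpos : 0 < ε := by rw [hε]; linarith
    have hA : ∀ᶠ n in atTop, ∃ jj : Fin 3, 1 - ε ≤ R^[n] x jj := by
      by_contra hA
      have hfreq : ∃ᶠ n in atTop, ∀ jj : Fin 3, R^[n] x jj < 1 - ε := by
        refine (Filter.not_eventually.1 hA).mono ?_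
        intro n hn jj
        by_contra hge
        exact hn ⟨jj, not_lt.1 hge⟩
      obtain ⟨φ, hφ, hφP⟩ := Filter.extraction_of_frequently_atTop hfreq
      obtain ⟨q, hqmem, ψ, hψ, hqt⟩ := simplex2_isCompact.tendsto_subseq
        (fun n => (hInv (φ n)).1)
      have hqΩ : q ∈ Ω := ⟨φ ∘ ψ, hφ.comp hψ, hqt⟩
      obtain ⟨m, hm1⟩ := hvert q hqΩ
      have hle : q m ≤ 1 - ε := by
        refine le_of_tendsto (((continuous_apply m).tendsto q).comp hqt) ?_
        exact Eventually.of_forall fun n => (hφP (ψ n) m).le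
      rw [hm1] at hle
      linarith
    obtain ⟨N, hN⟩ := eventually_atTop.1 hA
    obtain ⟨j0, hj0⟩ := hN N le_rfl
    have htrap : ∀ m : ℕ, 1 - ε ≤ R^[N + m] x j0 := by
      intro m; induction m with
      | zero => simpa using hj0
      | succ m ih =>
        have hd : 1 - R^[N + m + 1] x j0 ≤ 2 * (1 - R^[N + m] x j0) := by
          rw [horb (N + m)]
          exact near_step F R hFpos hR0 hR1 hR2 _ (hInv (N + m)).1 j0
        obtain ⟨j1, hj1⟩ := hN (N + m + 1) (by omega)
        have hNm : N + (m + 1) = N + m + 1 := by omega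
        by_cases hjj : j1 = j0
        · rw [hjj] at hj1
          rw [hNm]; exact hj1
        · exfalso
          have hsum2 := two_coord F R hFpos hR0 hR1 hR2 (hInv (N + m + 1)).1 j1 j0 hjj
          have hεle : ε ≤ 1/6 := by rw [hε]; linarith
          linarith
    have hgrow : ∀ m : ℕ, R^[N + m] x (![2,0,1] j0) * (1 + δ/2)
        ≤ R^[N + (m+1)] x (![2,0,1] j0) := by
      intro m
      have hNm : N + (m + 1) = N + m + 1 := by omega
      rw [hNm, horb (N + m)]
      exact grow_step F R hFpos hR0 hR1 hR2 δ hδpos hδ1 _ (hInv (N + m)).1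
        (hδF _ (hInv (N + m)).1) j0 (by linarith [htrap m])
    exact growth_lemma (fun m => R^[N + m] x (![2,0,1] j0)) (1 + δ/2) (by linarith)
      ((hInv N).2.1 _) (fun m => coord_le_one (hInv (N + m)).1 _) hgrow
  obtain ⟨p, hpΩ, j, hpj, hpk⟩ := hexist
  have hpmem : p ∈ simplex2 := hΩs p hpΩ
  have hqq : ∀ n : ℕ, (R^[n] p ∈ simplex2 ∧ R^[n] p j = 0 ∧ (∀ k, k ≠ j → 0 < R^[n] p k))
      ∧ R^[n] p ∈ Ω := by
    intro n; induction n with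
    | zero => exact ⟨⟨hpmem, hpj, hpk⟩, hpΩ⟩
    | succ n ih =>
      obtain ⟨⟨hm, hj, hk⟩, hΩn⟩ := ih
      have hstep := face_step F R hFpos hR0 hR1 hR2 j _ hm hj hk
      have he : R^[n+1] p = R (R^[n] p) := Function.iterate_succ_apply' R n p
      refine ⟨⟨?_, ?_, ?_⟩, ?_⟩
      · rw [he]; exact hRmem _ hm
      · rw [he]; exact hstep.1
      · rw [he]; exact hstep.2.1
      · rw [he]; exact hΩinv _ hΩn hm
  have hmono : StrictMono (fun n => R^[n] p (![1,2,0] j)) := by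
    refine strictMono_nat_of_lt_succ (fun n => ?_)
    have he : R^[n+1] p = R (R^[n] p) := Function.iterate_succ_apply' R n p
    rw [he]
    exact (face_step F R hFpos hR0 hR1 hR2 j _ (hqq n).1.1 (hqq n).1.2.1 (hqq n).1.2.2).2.2
  exact Set.infinite_of_injective_forall_mem
    (f := fun n : ℕ => R^[n] p)
    (fun a b hab => hmono.injective (by
      have h2 : R^[a] p = R^[b] p := hab
      rw [h2]))
    (fun n => (hqq n).2)
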